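/- Let A be an associative algebra, R : A → A a left A-linear map (R(ab) = aR(b)) and S : A → A a right A-linear map (S(ab) = S(a)b). Then (A, R, S) is a Rota-Baxter system if and only if for all a, b ∈ A, a·R(S(b)) = 0 and S(R(a))·b = 0. -/

import Mathlib

/-- For a left `A`-linear `R` and right `A`-linear `S`, `(A, R, S)` is a Rota-Baxter
system iff `a·R(S(b)) = 0` and `S(R(a))·b = 0` for all `a, b`. -/
theorem rbs_iff_orthogonality
    {K A : Type*} [Field K] [NonUnitalRing A] [Module K A]
    (R S : A →ₗ[K] A)
    (hRleft : ∀ a b : A, R (a * b) = a * R b)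
    (hSright : ∀ a b : A, S (a * b) = S a * b) :
    ((∀ a b : A, R a * R b = R (R a * b + a * S b)) ∧
     (∀ a b : A, S a * S b = S (R a * b + a * S b))) ↔
    (∀ a b : A, a * R (S b) = 0 ∧ S (R a) * b = 0) := by
  have hR : ∀ a b : A, R (R a * b + a * S b) = R a * R b + a * R (S b) := by
    intro a b; rw [map_add, hRleft, hRleft]
  have hS : ∀ a b : A, S (R a * b + a * S b) = S (R a) * b + S a * S b := by
    intro a b; rw [map_add, hSright, hSright]
  constructor
  · rintro ⟨h1, h2⟩ a b
    constructor
    · have := h1 a b; rw [hR] at this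
      exact (left_eq_add.mp this)
    · have := h2 a b; rw [hS] at this
      exact (right_eq_add.mp this)
  · intro h
    refine ⟨fun a b => ?_, fun a b => ?_⟩
    · rw [hR, (h a b).1, add_zero]
    · rw [hS, (h a b).2, zero_add]
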